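/- For all positive integers M ≤ N, with (X',Y) drawn from the null model, P(Z_{X',Y} = 0) = P(G_1 + G_2 + ⋯ + G_M > N), where G_1,…,G_M are i.i.d. geometric random variables with P(G_i = k) = 2^{−k} for every integer k ≥ 1. -/

import Mathlib

open List Finset
open scoped ENNReal


def A : ℕ → ℕ → ℕ
  | n, 0 => 2 ^ n
  | 0, _ + 1 => 0
  | n + 1, m + 1 => A n m + A n (m + 1)

lemma A_le (n : ℕ) : ∀ m, A n m ≤ 2 ^ n := by
  induction n with
  | zero => intro m; cases m <;> simp [A]
  | succ n ih =>
    intro m; cases m with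
    | zero => simp [A]
    | succ m =>
      calc A (n+1) (m+1) = A n m + A n (m+1) := rfl
        _ ≤ 2^n + 2^n := Nat.add_le_add (ih m) (ih (m+1))
        _ = 2^(n+1) := by ring

lemma A_succ_col (m : ℕ) : ∀ n, A n (m + 1) = ∑ j ∈ range n, A j m := by
  intro n
  induction n with
  | zero => simp [A]
  | succ n ih => rw [Finset.sum_range_succ, ← ih]; show A n m + A n (m+1) = _; omega


lemma embeds_iff_sublist {N M : ℕ} (x : Fin N → Bool) (y : Fin M → Bool) :
    (∃ σ : Fin M → Fin N, StrictMono σ ∧ ∀ j, x (σ j) = y j) ↔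
      List.ofFn y <+ List.ofFn x := by
  rw [List.sublist_iff_exists_fin_orderEmbedding_get_eq]
  constructor
  · rintro ⟨σ, hmono, hx⟩
    refine ⟨OrderEmbedding.ofStrictMono
      (fun i => Fin.cast (List.length_ofFn (f := x)).symm (σ (Fin.cast (List.length_ofFn (f := y)) i)))
      (fun a b hab => ?_), fun ix => ?_⟩
    · have : σ (Fin.cast (List.length_ofFn (f := y)) a) < σ (Fin.cast (List.length_ofFn (f := y)) b) :=
        hmono (by rwa [Fin.lt_def, Fin.coe_cast, Fin.coe_cast, ← Fin.lt_def])
      rwa [Fin.lt_def, Fin.coe_cast, Fin.coe_cast, ← Fin.lt_def]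
    · rw [List.get_ofFn, List.get_ofFn]
      exact (hx _).symm
  · rintro ⟨f, hf⟩
    refine ⟨fun j => Fin.cast (List.length_ofFn (f := x)) (f (Fin.cast (List.length_ofFn (f := y)).symm j)),
      fun a b hab => ?_, fun j => ?_⟩
    · have : f (Fin.cast (List.length_ofFn (f := y)).symm a) < f (Fin.cast (List.length_ofFn (f := y)).symm b) :=
        f.strictMono (by rwa [Fin.lt_def, Fin.coe_cast, Fin.coe_cast, ← Fin.lt_def])
      rwa [Fin.lt_def, Fin.coe_cast, Fin.coe_cast, ← Fin.lt_def]
    · have := hf (Fin.cast (List.length_ofFn (f := y)).symm j)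
      rw [List.get_ofFn, List.get_ofFn] at this
      exact this.symm

lemma card_zero_iff {N M : ℕ} (x : Fin N → Bool) (y : Fin M → Bool) :
    Nat.card {σ : Fin M → Fin N // StrictMono σ ∧ ∀ j, x (σ j) = y j} = 0 ↔
      ¬ (List.ofFn y <+ List.ofFn x) := by
  have hfin : Finite {σ : Fin M → Fin N // StrictMono σ ∧ ∀ j, x (σ j) = y j} :=
    Subtype.finite
  rw [Nat.card_eq_zero, or_iff_left (not_infinite_iff_finite.mpr hfin), isEmpty_subtype,
    ← embeds_iff_sublist x y]
  exact not_exists.symm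

lemma cons_sublist_cons_iff' {b c : Bool} {t l : List Bool} :
    (b :: t) <+ (c :: l) ↔ if c = b then t <+ l else (b :: t) <+ l := by
  by_cases h : c = b
  · subst h; simp [List.cons_sublist_cons]
  · simp only [h, if_false]
    constructor
    · intro hs
      cases hs with
      | cons _ hs => exact hs
      | cons_cons => exact absurd rfl h
    · exact fun hs => hs.cons c

lemma card_sublist (t : List Bool) : ∀ n : ℕ,
    (Finset.univ.filter fun x : Fin n → Bool => t <+ List.ofFn x).card = A n t.length := by
  induction t with
  | nil => intro n; simp [List.nil_sublist, A, Finset.filter_true_of_mem]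
  | cons b t ih =>
    intro n
    induction n with
    | zero =>
      have : ∀ x : Fin 0 → Bool, ¬ ((b :: t) <+ List.ofFn x) := by
        intro x; simp [List.ofFn_zero]
      simp only [List.length_cons, A]
      rw [Finset.filter_false_of_mem (fun x _ => this x), Finset.card_empty]
    | succ n ihn =>
      rw [Finset.card_filter]
      rw [← Equiv.sum_comp (Fin.consEquiv (fun _ : Fin (n+1) => Bool))
        (fun x => if (b :: t) <+ List.ofFn x then (1:ℕ) else 0)]
      rw [Fintype.sum_prod_type]
      have hout : ∀ c : Bool, ∀ x' : Fin n → Bool,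
          List.ofFn ((Fin.consEquiv (fun _ : Fin (n+1) => Bool)) (c, x')) = c :: List.ofFn x' := by
        intro c x'
        simp [Fin.consEquiv, List.ofFn_succ, Fin.cons_zero, Fin.cons_succ]
      have hsum : ∀ c : Bool, (∑ x' : Fin n → Bool,
          if (b :: t) <+ List.ofFn ((Fin.consEquiv (fun _ : Fin (n+1) => Bool)) (c, x')) then (1:ℕ) else 0)
          = if c = b then A n t.length else A n (t.length + 1) := by
        intro c
        simp only [hout, cons_sublist_cons_iff']
        by_cases h : c = b
        · simp only [h, if_true, ← Finset.card_filter]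
          exact ih n
        · simp only [h, if_false, ← Finset.card_filter]
          exact ihn
      rw [Fintype.sum_bool, hsum true, hsum false]
      show _ = A n t.length + A n (t.length + 1)
      cases b <;> simp <;> omega

lemma card_pairs (N M : ℕ) :
    Nat.card {p : (Fin N → Bool) × (Fin M → Bool) // ¬ (List.ofFn p.2 <+ List.ofFn p.1)} =
      2 ^ M * (2 ^ N - A N M) := by
  rw [Nat.card_eq_fintype_card, Fintype.card_subtype, Finset.card_filter,
    Fintype.sum_prod_type, Finset.sum_comm]
  have inner : ∀ y : Fin M → Bool,
      (∑ x : Fin N → Bool, if ¬ (List.ofFn y <+ List.ofFn x) then (1:ℕ) else 0)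
        = 2 ^ N - A N M := by
    intro y
    rw [← Finset.card_filter]
    have h2 := Finset.card_filter_add_card_filter_not
      (s := (Finset.univ : Finset (Fin N → Bool)))
      (p := fun x => List.ofFn y <+ List.ofFn x)
    have h3 : (Finset.univ.filter fun x : Fin N → Bool => List.ofFn y <+ List.ofFn x).card
        = A N M := by simpa using card_sublist (List.ofFn y) N
    have h4 : (Finset.univ : Finset (Fin N → Bool)).card = 2 ^ N := by
      simp [Finset.card_univ]
    omega
  rw [Finset.sum_congr rfl (fun y _ => inner y), Finset.sum_const, Finset.card_univ]
  simp [mul_comm]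


lemma geo_tsum : ∑' k : ℕ, (if 1 ≤ k then (2⁻¹ : ℝ≥0∞) ^ k else 0) = 1 := by
  have h := tsum_eq_zero_add' (f := fun k : ℕ => if 1 ≤ k then (2⁻¹ : ℝ≥0∞) ^ k else 0)
    (ENNReal.summable)
  rw [h]
  norm_num
  rw [ENNReal.tsum_geometric_add_one, ENNReal.one_sub_inv_two, inv_inv,
    ENNReal.inv_mul_cancel two_ne_zero ENNReal.ofNat_ne_top]

lemma cons_split (m : ℕ) (P : ℕ → Prop) [DecidablePred P] (Q : (Fin m → ℕ) → Prop)
    [DecidablePred Q] (k : ℕ) (g : Fin m → ℕ) :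
    (if P k ∧ Q g then (2⁻¹ : ℝ≥0∞) ^ k * ∏ i, (2⁻¹ : ℝ≥0∞) ^ g i else 0) =
      (if P k then (2⁻¹ : ℝ≥0∞) ^ k else 0) * (if Q g then ∏ i, (2⁻¹ : ℝ≥0∞) ^ g i else 0) := by
  by_cases h1 : P k <;> by_cases h2 : Q g <;> simp [h1, h2]

lemma prod_cons_pow (m : ℕ) (k : ℕ) (g : Fin m → ℕ) :
    (∏ i, (2⁻¹ : ℝ≥0∞) ^ (Fin.cons k g : Fin (m+1) → ℕ) i) =
      (2⁻¹ : ℝ≥0∞) ^ k * ∏ i, (2⁻¹ : ℝ≥0∞) ^ g i := by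
  rw [show (fun i => (2⁻¹ : ℝ≥0∞) ^ (Fin.cons k g : Fin (m+1) → ℕ) i) =
    Fin.cons ((2⁻¹:ℝ≥0∞)^k) (fun i => (2⁻¹:ℝ≥0∞) ^ g i) from ?_, Fin.prod_cons]
  ext i
  refine Fin.cases ?_ (fun j => ?_) i <;> simp

lemma cond_cons (m : ℕ) (k : ℕ) (g : Fin m → ℕ) :
    (∀ i, 1 ≤ (Fin.cons k g : Fin (m+1) → ℕ) i) ↔ (1 ≤ k ∧ ∀ i, 1 ≤ g i) := by
  rw [Fin.forall_fin_succ]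
  simp

lemma E_full : ∀ m : ℕ,
    ∑' g : Fin m → ℕ, (if ∀ i, 1 ≤ g i then ∏ i, (2⁻¹ : ℝ≥0∞) ^ g i else 0) = 1 := by
  intro m
  induction m with
  | zero =>
    rw [tsum_eq_single (fun i => i.elim0) (fun b hb =>
      absurd (Subsingleton.elim b _) hb)]
    simp
  | succ m ih =>
    rw [← Equiv.tsum_eq (Fin.consEquiv (fun _ : Fin (m+1) => ℕ)), ENNReal.tsum_prod']
    have key : ∀ (k : ℕ) (g : Fin m → ℕ),
        (if ∀ i, 1 ≤ (Fin.cons k g : Fin (m+1) → ℕ) i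
          then ∏ i, (2⁻¹ : ℝ≥0∞) ^ (Fin.cons k g : Fin (m+1) → ℕ) i else 0) =
        (if 1 ≤ k then (2⁻¹ : ℝ≥0∞) ^ k else 0) *
          (if ∀ i, 1 ≤ g i then ∏ i, (2⁻¹ : ℝ≥0∞) ^ g i else 0) := by
      intro k g
      rw [prod_cons_pow, if_congr (cond_cons m k g) rfl rfl]
      by_cases h1 : 1 ≤ k <;> by_cases h2 : ∀ i, 1 ≤ g i <;> simp [h1, h2]
    simp only [Fin.consEquiv_apply]
    simp only [key]
    simp only [ENNReal.tsum_mul_left, ih, mul_one]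
    exact geo_tsum

lemma sum_cons' (m : ℕ) (k : ℕ) (g : Fin m → ℕ) :
    (∑ i, (Fin.cons k g : Fin (m+1) → ℕ) i) = k + ∑ i, g i := by
  rw [Fin.sum_univ_succ]
  simp

lemma two_pow_cancel (n : ℕ) : ((2:ℝ≥0∞) ^ n) * 2⁻¹ ^ n = 1 := by
  rw [← mul_pow, ENNReal.mul_inv_cancel two_ne_zero ENNReal.ofNat_ne_top, one_pow]

lemma E_le : ∀ m n : ℕ,
    ∑' g : Fin m → ℕ, (if (∀ i, 1 ≤ g i) ∧ ∑ i, g i ≤ n then ∏ i, (2⁻¹ : ℝ≥0∞) ^ g i else 0)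
      = (A n m : ℝ≥0∞) * 2⁻¹ ^ n := by
  intro m
  induction m with
  | zero =>
    intro n
    rw [tsum_eq_single (fun i => i.elim0) (fun b hb => absurd (Subsingleton.elim b _) hb)]
    have : A n 0 = 2 ^ n := by simp [A]
    simp [this, two_pow_cancel n]
  | succ m ih =>
    intro n
    rw [← Equiv.tsum_eq (Fin.consEquiv (fun _ : Fin (m+1) => ℕ)), ENNReal.tsum_prod']
    simp only [Fin.consEquiv_apply]
    have key : ∀ k : ℕ, (∑' g : Fin m → ℕ,
        if (∀ i, 1 ≤ (Fin.cons k g : Fin (m+1) → ℕ) i) ∧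
            (∑ i, (Fin.cons k g : Fin (m+1) → ℕ) i) ≤ n
          then ∏ i, (2⁻¹ : ℝ≥0∞) ^ (Fin.cons k g : Fin (m+1) → ℕ) i else 0)
        = if 1 ≤ k ∧ k ≤ n then (A (n - k) m : ℝ≥0∞) * 2⁻¹ ^ n else 0 := by
      intro k
      have hpt : ∀ g : Fin m → ℕ,
          (if (∀ i, 1 ≤ (Fin.cons k g : Fin (m+1) → ℕ) i) ∧
              (∑ i, (Fin.cons k g : Fin (m+1) → ℕ) i) ≤ n
            then ∏ i, (2⁻¹ : ℝ≥0∞) ^ (Fin.cons k g : Fin (m+1) → ℕ) i else 0)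
          = (if (1 ≤ k ∧ ∀ i, 1 ≤ g i) ∧ k + ∑ i, g i ≤ n
              then (2⁻¹ : ℝ≥0∞) ^ k * ∏ i, (2⁻¹ : ℝ≥0∞) ^ g i else 0) := by
        intro g
        rw [prod_cons_pow, if_congr (and_congr (cond_cons m k g)
          (by rw [sum_cons' m k g])) rfl rfl]
      simp only [hpt]
      by_cases h1 : 1 ≤ k
      · by_cases h2 : k ≤ n
        · have hiff : ∀ g : Fin m → ℕ,
              ((1 ≤ k ∧ ∀ i, 1 ≤ g i) ∧ k + ∑ i, g i ≤ n) ↔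
                ((∀ i, 1 ≤ g i) ∧ ∑ i, g i ≤ n - k) := by
            intro g; constructor
            · rintro ⟨⟨_, h3⟩, h4⟩; exact ⟨h3, by omega⟩
            · rintro ⟨h3, h4⟩; exact ⟨⟨h1, h3⟩, by omega⟩
          have : ∀ g : Fin m → ℕ,
              (if (1 ≤ k ∧ ∀ i, 1 ≤ g i) ∧ k + ∑ i, g i ≤ n
                then (2⁻¹ : ℝ≥0∞) ^ k * ∏ i, (2⁻¹ : ℝ≥0∞) ^ g i else 0)
              = (2⁻¹ : ℝ≥0∞) ^ k * (if (∀ i, 1 ≤ g i) ∧ ∑ i, g i ≤ n - k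
                  then ∏ i, (2⁻¹ : ℝ≥0∞) ^ g i else 0) := by
            intro g
            rw [if_congr (hiff g) rfl rfl]
            by_cases h : (∀ i, 1 ≤ g i) ∧ ∑ i, g i ≤ n - k <;> simp [h]
          simp only [this, ENNReal.tsum_mul_left, ih (n - k)]
          rw [if_pos ⟨h1, h2⟩,
            show (2:ℝ≥0∞)⁻¹ ^ k * (↑(A (n-k) m) * 2⁻¹ ^ (n-k))
              = ↑(A (n-k) m) * (2⁻¹ ^ k * 2⁻¹ ^ (n-k)) from by ring,
            ← pow_add, show k + (n - k) = n from by omega]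
        · have : ∀ g : Fin m → ℕ, ¬ ((1 ≤ k ∧ ∀ i, 1 ≤ g i) ∧ k + ∑ i, g i ≤ n) := by
            intro g; rintro ⟨_, h4⟩; omega
          simp [this, h2]
      · simp [h1]
    simp only [key]
    rw [tsum_eq_sum (s := Finset.range (n + 1))
      (fun k hk => by rw [if_neg]; rintro ⟨_, h⟩; exact hk (Finset.mem_range.mpr (by omega)))]
    rw [Finset.sum_range_succ', if_neg (by omega : ¬ ((1:ℕ) ≤ 0 ∧ 0 ≤ n)), add_zero]
    have : ∀ i ∈ Finset.range n,
        (if 1 ≤ i + 1 ∧ i + 1 ≤ n then (A (n - (i+1)) m : ℝ≥0∞) * 2⁻¹ ^ n else 0)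
          = (fun j => (A j m : ℝ≥0∞) * 2⁻¹ ^ n) (n - 1 - i) := by
      intro i hi
      have hi' := Finset.mem_range.mp hi
      rw [if_pos ⟨by omega, by omega⟩]
      have : n - (i + 1) = n - 1 - i := by omega
      rw [this]
    rw [Finset.sum_congr rfl this, Finset.sum_range_reflect (fun j => (A j m : ℝ≥0∞) * 2⁻¹ ^ n) n,
      ← Finset.sum_mul, A_succ_col m n]
    push_cast
    ring


/-- Number of subsequence embeddings of `y` into `x`. -/
noncomputable def subseqCount (N M : ℕ) (x : Fin N → Bool) (y : Fin M → Bool) : ℕ :=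
  Nat.card {σ : Fin M → Fin N // StrictMono σ ∧ ∀ j, x (σ j) = y j}

/-- Probability of an event under the null model. -/
noncomputable def nullProb (N M : ℕ)
    (E : (Fin N → Bool) → (Fin M → Bool) → Prop) : ℝ :=
  (Nat.card {p : (Fin N → Bool) × (Fin M → Bool) // E p.1 p.2} : ℝ) /
    ((2 : ℝ) ^ N * (2 : ℝ) ^ M)

/-- Under the null model, `P(Z_{X',Y} = 0)` equals the probability that a sum of `M`
i.i.d. geometric random variables (`P(G = k) = 2^{-k}` for `k ≥ 1`) exceeds `N`;
the right-hand side is written as the sum over all outcomes `g : Fin M → ℕ` with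
`g i ≥ 1` for all `i` and `∑ g i > N` of their probabilities `∏ 2^{-g i}`. -/
theorem null_zero_prob_geometric (N M : ℕ) (hM : 1 ≤ M) (hMN : M ≤ N) :
    nullProb N M (fun x y => subseqCount N M x y = 0) =
      ∑' g : Fin M → ℕ,
        if (∀ i, 1 ≤ g i) ∧ N < ∑ i, g i then ∏ i, ((2 : ℝ)⁻¹) ^ g i else 0 := by
  have hA : A N M ≤ 2 ^ N := A_le N M
  set fI : (Fin M → ℕ) → ℝ≥0∞ := fun g =>
    if (∀ i, 1 ≤ g i) ∧ N < ∑ i, g i then ∏ i, (2⁻¹ : ℝ≥0∞) ^ g i else 0 with hf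
  have hsplit : ∀ g : Fin M → ℕ,
      (if ∀ i, 1 ≤ g i then ∏ i, (2⁻¹ : ℝ≥0∞) ^ g i else 0) =
        (if (∀ i, 1 ≤ g i) ∧ ∑ i, g i ≤ N then ∏ i, (2⁻¹ : ℝ≥0∞) ^ g i else 0) + fI g := by
    intro g
    simp only [hf]
    by_cases h1 : ∀ i, 1 ≤ g i
    · by_cases h2 : ∑ i, g i ≤ N
      · rw [if_pos h1, if_pos (show (∀ i, 1 ≤ g i) ∧ ∑ i, g i ≤ N from ⟨h1, h2⟩),
          if_neg (show ¬ ((∀ i, 1 ≤ g i) ∧ N < ∑ i, g i) from fun h => by omega), add_zero]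
      · rw [if_pos h1, if_neg (show ¬ ((∀ i, 1 ≤ g i) ∧ ∑ i, g i ≤ N) from fun h => h2 h.2),
          if_pos (show (∀ i, 1 ≤ g i) ∧ N < ∑ i, g i from ⟨h1, by omega⟩), zero_add]
    · simp [h1]
  have hEq : (A N M : ℝ≥0∞) * 2⁻¹ ^ N + ∑' g, fI g = 1 := by
    rw [← E_le M N, ← ENNReal.tsum_add, ← E_full M]
    exact tsum_congr fun g => (hsplit g).symm
  have hfin : (A N M : ℝ≥0∞) * 2⁻¹ ^ N ≠ ∞ :=
    ENNReal.mul_ne_top (ENNReal.natCast_ne_top _)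
      (ENNReal.pow_ne_top (ENNReal.inv_ne_top.mpr two_ne_zero))
  have hS : ∑' g, fI g = 1 - (A N M : ℝ≥0∞) * 2⁻¹ ^ N :=
    ENNReal.eq_sub_of_add_eq hfin (by rw [add_comm]; exact hEq)
  have hle : (A N M : ℝ≥0∞) * 2⁻¹ ^ N ≤ 1 := hEq ▸ le_self_add
  have hR : (∑' g : Fin M → ℕ,
      if (∀ i, 1 ≤ g i) ∧ N < ∑ i, g i then ∏ i, ((2:ℝ)⁻¹) ^ g i else 0)
      = (∑' g, fI g).toReal := by
    rw [ENNReal.tsum_toReal_eq (fun g => ?_)]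
    · refine tsum_congr fun g => ?_
      by_cases h : (∀ i, 1 ≤ g i) ∧ N < ∑ i, g i
      · rw [hf]; simp only [if_pos h, ENNReal.toReal_prod, ENNReal.toReal_pow,
          ENNReal.toReal_inv, ENNReal.toReal_ofNat]
      · simp only [hf]; simp [h]
    · simp only [hf]
      by_cases h : (∀ i, 1 ≤ g i) ∧ N < ∑ i, g i
      · simp only [if_pos h]
        exact ENNReal.prod_ne_top fun i _ =>
          ENNReal.pow_ne_top (ENNReal.inv_ne_top.mpr two_ne_zero)
      · simp [h]
  rw [hR, hS, ENNReal.toReal_sub_of_le hle ENNReal.one_ne_top]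
  have htr : ((A N M : ℝ≥0∞) * 2⁻¹ ^ N).toReal = (A N M : ℝ) / 2 ^ N := by
    rw [ENNReal.toReal_mul, ENNReal.toReal_pow, ENNReal.toReal_inv]
    simp [div_eq_mul_inv, inv_pow]
  rw [ENNReal.toReal_one, htr]
  have hcard : Nat.card {p : (Fin N → Bool) × (Fin M → Bool) // subseqCount N M p.1 p.2 = 0}
      = 2 ^ M * (2 ^ N - A N M) := by
    rw [← card_pairs N M]
    exact Nat.card_congr (Equiv.subtypeEquivRight fun p => by
      simpa [subseqCount] using card_zero_iff p.1 p.2)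
  rw [nullProb, hcard, Nat.cast_mul, Nat.cast_sub hA]
  push_cast
  have h2N : (2:ℝ) ^ N ≠ 0 := by positivity
  have h2M : (2:ℝ) ^ M ≠ 0 := by positivity
  field_simp
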